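/- For every integer g ≥ 2: lim_{t→1⁻} (1−t²) · P²_{g}(t) / (1+t)^{2g} = g·2^{2g−2} and lim_{t→1⁻} (1−t) · P²ℝ_{g,g+1}(t) / (1+t)^{g} = g·2^{2g−2}. In particular the two limits are equal: the total mod 2 Betti number of the moduli space of semistable rank-2, degree-1 bundles with fixed determinant on a maximal real curve of genus g equals the total mod 2 Betti number of the corresponding complex fixed-determinant moduli space. -/
import Mathlib

open Finset

noncomputable section

/-- `ang x` is `⟨x⟩ = ⌊x⌋ + 1 - x`, the unique element of `(0,1]` with `x + ⟨x⟩ ∈ ℤ`. -/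
def ang (x : ℝ) : ℝ := (⌊x⌋ : ℝ) + 1 - x

/-- `P²_g(t)`, the rational equivariant Poincaré series of semistable rank 2, degree 1
holomorphic structures on a genus `g` Riemann surface. -/
def P2 (g : ℕ) (t : ℝ) : ℝ :=
  ((1+t)^(2*g) * (1+t^3)^(2*g) - t^(2*g) * (1+t)^(4*g)) / ((1-t^2)^2 * (1-t^4))

/-- `P²ℝ_{g,n}(t)`, the mod 2 equivariant Poincaré series of semistable real holomorphic
structures of rank 2 and degree 1 on a Klein surface of type `(g,n,a)`, `n > 0`. -/
def P2R (g n : ℕ) (t : ℝ) : ℝ :=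
  (1+t)^(g+n+1) * (1+t^2)^n * (1+t^3)^(g+1-n) / ((1-t^2)^2 * (1-t^4)) -
    2^(n-1) * (1+t)^(2*g+2) * t^g / (1-t^2)^3

/-- The moduli space of semistable rank 2, degree 1 bundles with fixed determinant on a
maximal real curve of genus `g` is a maximal real algebraic variety: the total mod 2 Betti
numbers of the complex and real fixed-determinant moduli spaces both equal `g·2^{2g-2}`. -/
theorem stmt18 (g : ℕ) (hg : 2 ≤ g) :
    Filter.Tendsto (fun t : ℝ => (1 - t^2) * P2 g t / (1+t)^(2*g))
      (nhdsWithin 1 (Set.Ioo (0:ℝ) 1)) (nhds ((g : ℝ) * 2^(2*g-2))) ∧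
    Filter.Tendsto (fun t : ℝ => (1 - t) * P2R g (g+1) t / (1+t)^g)
      (nhdsWithin 1 (Set.Ioo (0:ℝ) 1)) (nhds ((g : ℝ) * 2^(2*g-2))) := by
  constructor
  · -- complex part
    have key : ∀ t ∈ Set.Ioo (0:ℝ) 1,
        (∑ i ∈ range (2*g), (1+t^3)^i * (t+t^2)^(2*g-1-i)) / ((1+t)*(1+t^2))
          = (1 - t^2) * P2 g t / (1+t)^(2*g) := by
      intro t ht
      obtain ⟨ht0, ht1⟩ := ht
      have ht2 : t^2 < 1 := pow_lt_one₀ ht0.le ht1 (by norm_num)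
      have ht4 : t^4 < 1 := pow_lt_one₀ ht0.le ht1 (by norm_num)
      have h4 : (1:ℝ) - t^2 ≠ 0 := by nlinarith
      have h5 : (1:ℝ) - t^4 ≠ 0 := by nlinarith
      have hS := geom_sum₂_mul (1+t^3) (t+t^2) (2*g)
      have hb : t^(2*g) * (1+t)^(4*g) = (t+t^2)^(2*g) * (1+t)^(2*g) := by
        have h : (t+t^2)^(2*g) = t^(2*g) * (1+t)^(2*g) := by
          rw [← mul_pow]; congr 1; ring
        rw [h]; ring
      rw [P2, hb, mul_div_assoc', div_div, eq_comm,
        div_eq_div_iff (by positivity) (by positivity)]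
      linear_combination (-(1-t^2)*(1+t)*(1+t^2)*(1+t)^(2*g)) * hS
    have hnum : Filter.Tendsto
        (fun t : ℝ => ∑ i ∈ range (2*g), (1+t^3)^i * (t+t^2)^(2*g-1-i))
        (nhds 1) (nhds ((2*g : ℝ) * 2^(2*g-1))) := by
      have hc : Continuous (fun t : ℝ => ∑ i ∈ range (2*g), (1+t^3)^i * (t+t^2)^(2*g-1-i)) :=
        continuous_finset_sum _ fun i _ => by continuity
      have hval : (∑ i ∈ range (2*g), ((1:ℝ)+(1:ℝ)^3)^i * ((1:ℝ)+(1:ℝ)^2)^(2*g-1-i))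
          = (2*g : ℝ) * 2^(2*g-1) := by
        have h : ∀ i ∈ range (2*g),
            ((1:ℝ)+(1:ℝ)^3)^i * ((1:ℝ)+(1:ℝ)^2)^(2*g-1-i) = (2:ℝ)^(2*g-1) := by
          intro i hi
          rw [mem_range] at hi
          norm_num
          rw [← pow_add]
          congr 1
          omega
        rw [Finset.sum_congr rfl h, Finset.sum_const, card_range, nsmul_eq_mul]
        push_cast; ring
      rw [← hval]
      exact hc.tendsto 1
    have hden : Filter.Tendsto (fun t : ℝ => (1+t)*(1+t^2)) (nhds 1) (nhds 4) := by
      have hc : Continuous (fun t : ℝ => (1+t)*(1+t^2)) := by continuity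
      have := hc.tendsto 1
      norm_num at this
      exact this
    have hFt : Filter.Tendsto
        (fun t : ℝ => (∑ i ∈ range (2*g), (1+t^3)^i * (t+t^2)^(2*g-1-i)) / ((1+t)*(1+t^2)))
        (nhds 1) (nhds ((g : ℝ) * 2^(2*g-2))) := by
      have h := hnum.div hden (by norm_num)
      have hv : ((2*g : ℝ) * 2^(2*g-1)) / 4 = (g : ℝ) * 2^(2*g-2) := by
        have h2 : (2:ℝ)^(2*g-1) = 2^(2*g-2)*2 := by
          rw [← pow_succ]; congr 1; omega
        rw [h2]; ring
      rw [hv] at h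
      exact h
    exact Filter.Tendsto.congr'
      (Filter.eventuallyEq_of_mem self_mem_nhdsWithin key)
      (hFt.mono_left nhdsWithin_le_nhds)
  · -- real part
    have key : ∀ t ∈ Set.Ioo (0:ℝ) 1,
        (1+t)^(g-1) * (∑ i ∈ range g, (1+t^2)^i * (2*t)^(g-1-i))
          = (1 - t) * P2R g (g+1) t / (1+t)^g := by
      intro t ht
      obtain ⟨ht0, ht1⟩ := ht
      have ht2 : t^2 < 1 := pow_lt_one₀ ht0.le ht1 (by norm_num)
      have ht4 : t^4 < 1 := pow_lt_one₀ ht0.le ht1 (by norm_num)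
      have h2 : (1:ℝ) - t ≠ 0 := by nlinarith
      have h4 : (1:ℝ) - t^2 ≠ 0 := by nlinarith
      have h5 : (1:ℝ) - t^4 ≠ 0 := by nlinarith
      have hT := geom_sum₂_mul (1+t^2) (2*t) g
      have e0 : g+1-(g+1) = 0 := by omega
      have e1 : g+1-1 = g := by omega
      have e2 : g+(g+1)+1 = 2*g+2 := by omega
      have hpow : (1+t)^(2*g+2) = (1+t)^g * (1+t)^(g-1) * (1+t)^3 := by
        rw [← pow_add, ← pow_add]; congr 1; omega
      rw [P2R, e0, e1, e2, hpow,
        div_sub_div _ _ (by positivity) (by positivity), mul_div_assoc', div_div, eq_comm,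
        div_eq_iff (by positivity)]
      linear_combination (-(1-t)*(1-t^2)^3*(1+t^2)*(1+t)^g*(1+t)^(g-1)*(1+t)^3) * hT
    have hGt : Filter.Tendsto
        (fun t : ℝ => (1+t)^(g-1) * (∑ i ∈ range g, (1+t^2)^i * (2*t)^(g-1-i)))
        (nhds 1) (nhds ((g : ℝ) * 2^(2*g-2))) := by
      have hc : Continuous
          (fun t : ℝ => (1+t)^(g-1) * (∑ i ∈ range g, (1+t^2)^i * (2*t)^(g-1-i))) :=
        ((continuous_const.add continuous_id).pow _).mul
          (continuous_finset_sum _ fun i _ => by continuity)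
      have hval : ((1:ℝ)+1)^(g-1) * (∑ i ∈ range g, ((1:ℝ)+(1:ℝ)^2)^i * (2*(1:ℝ))^(g-1-i))
          = (g : ℝ) * 2^(2*g-2) := by
        have h : ∀ i ∈ range g,
            ((1:ℝ)+(1:ℝ)^2)^i * (2*(1:ℝ))^(g-1-i) = (2:ℝ)^(g-1) := by
          intro i hi
          rw [mem_range] at hi
          norm_num
          rw [← pow_add]
          congr 1
          omega
        rw [Finset.sum_congr rfl h, Finset.sum_const, card_range, nsmul_eq_mul]
        have h2 : (2:ℝ)^(g-1) * (2:ℝ)^(g-1) = 2^(2*g-2) := by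
          rw [← pow_add]; congr 1; omega
        norm_num
        linear_combination (g:ℝ) * h2
      rw [← hval]
      exact hc.tendsto 1
    exact Filter.Tendsto.congr'
      (Filter.eventuallyEq_of_mem self_mem_nhdsWithin key)
      (hGt.mono_left nhdsWithin_le_nhds)

end
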